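/- arXiv:2411.18210 — 2 statements merged into one kernel-verified Lean document; each statement's English description precedes it below -/
import Mathlib

section
/- If for all eigenvalues λ, μ of a square tensor A ∈ R^{J1×…×JN×J1×…×JN} one has λ + μ̄ ≠ 0 (equivalently, λ_i(A) + conj(λ_j(A)) ≠ 0 for all i,j), then the tensor Lyapunov equation A * X + X * A^T + B * B^T = 0 has a unique solution X ∈ R^{J1×…×JN×J1×…×JN}. -/
open Matrix Polynomial

namespace LyapAux

variable {n : Type*} [Fintype n] [DecidableEq n]

lemma eval_charpoly_eq (M : Matrix n n ℂ) (μ : ℂ) :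
    M.charpoly.eval μ = (algebraMap ℂ (Matrix n n ℂ) μ - M).det := by
  have h := RingHom.map_det (Polynomial.evalRingHom μ) (charmatrix M)
  rw [Matrix.charpoly]
  show (Polynomial.evalRingHom μ) (charmatrix M).det = _
  rw [h]
  congr 1
  ext i j
  by_cases hij : i = j <;>
    simp [charmatrix_apply, Matrix.map_apply, Matrix.diagonal_apply, hij,
      Matrix.algebraMap_matrix_apply, Matrix.sub_apply]

lemma mem_spec_iff_root (M : Matrix n n ℂ) (μ : ℂ) :
    μ ∈ spectrum ℂ M ↔ M.charpoly.eval μ = 0 := by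
  rw [spectrum.mem_iff, eval_charpoly_eq, Matrix.isUnit_iff_isUnit_det,
    isUnit_iff_ne_zero, not_not]

lemma spec_transpose (M : Matrix n n ℂ) : spectrum ℂ Mᵀ = spectrum ℂ M := by
  ext μ
  rw [mem_spec_iff_root, mem_spec_iff_root, eval_charpoly_eq, eval_charpoly_eq]
  have : algebraMap ℂ (Matrix n n ℂ) μ - Mᵀ = (algebraMap ℂ (Matrix n n ℂ) μ - M)ᵀ := by
    ext i j
    by_cases hij : i = j <;>
      simp [Matrix.algebraMap_matrix_apply, Matrix.sub_apply, Matrix.transpose_apply, hij,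
        eq_comm]
  rw [this, Matrix.det_transpose]

lemma neg_mem_spec_iff (M : Matrix n n ℂ) (μ : ℂ) :
    μ ∈ spectrum ℂ (-M) ↔ -μ ∈ spectrum ℂ M := by
  rw [spectrum.mem_iff, spectrum.mem_iff]
  have : algebraMap ℂ (Matrix n n ℂ) μ - (-M)
      = -(algebraMap ℂ (Matrix n n ℂ) (-μ) - M) := by
    simp [map_neg]
    abel
  rw [this, IsUnit.neg_iff]

lemma star_mem_spec (M : Matrix n n ℝ) {μ : ℂ}
    (hμ : μ ∈ spectrum ℂ (M.map (algebraMap ℝ ℂ))) :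
    star μ ∈ spectrum ℂ (M.map (algebraMap ℝ ℂ)) := by
  rw [mem_spec_iff_root, Matrix.charpoly_map] at hμ ⊢
  have h1 : ∀ z : ℂ, (M.charpoly.map (algebraMap ℝ ℂ)).eval z = aeval z M.charpoly := by
    intro z
    rw [aeval_def, eval₂_eq_eval_map]
  rw [h1] at hμ ⊢
  have := Polynomial.aeval_conj (K := ℂ) M.charpoly μ
  rw [Complex.star_def, this, hμ, map_zero]

lemma pow_intertwine {R : Type*} [CommRing R] (A' C X : Matrix n n R)
    (hx : A' * X = X * C) (k : ℕ) : A' ^ k * X = X * C ^ k := by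
  induction k with
  | zero => simp
  | succ k ih => rw [pow_succ, pow_succ, mul_assoc, hx, ← mul_assoc, ih, mul_assoc]

lemma aeval_intertwine {R : Type*} [CommRing R] (A' C X : Matrix n n R)
    (hx : A' * X = X * C) (p : R[X]) :
    (aeval A' p) * X = X * (aeval C p) := by
  induction p using Polynomial.induction_on' with
  | add p q hp hq => rw [map_add, map_add, add_mul, mul_add, hp, hq]
  | monomial k a =>
      rw [aeval_monomial, aeval_monomial, mul_assoc, pow_intertwine A' C X hx k,
        ← mul_assoc, Algebra.commutes a X, mul_assoc]

/-- Key injectivity lemma for the Sylvester/Lyapunov operator. -/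
lemma sylvester_inj (A : Matrix n n ℝ)
    (h : ∀ lam mu : ℂ, lam ∈ spectrum ℂ (A.map (algebraMap ℝ ℂ)) →
         mu ∈ spectrum ℂ (A.map (algebraMap ℝ ℂ)) → lam + star mu ≠ 0)
    (X : Matrix n n ℝ) (hX : A * X + X * Aᵀ = 0) : X = 0 := by
  rcases isEmpty_or_nonempty n with hn | hn
  · ext i j; exact isEmptyElim i
  haveI : Nontrivial (Matrix n n ℂ) := by
    obtain ⟨i⟩ := hn
    exact ⟨1, 0, fun hc => by simpa using congrFun (congrFun hc i) i⟩
  set f := algebraMap ℝ ℂ with hf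
  set Ac := A.map f with hAc
  set Xc := X.map f with hXc
  -- complexified equation
  have hXc0 : Ac * Xc + Xc * Acᵀ = 0 := by
    have := congrArg (fun M : Matrix n n ℝ => M.map f) hX
    simpa [Matrix.map_mul, Matrix.map_add, Matrix.transpose_map] using this
  have hx : Ac * Xc = Xc * (-Acᵀ) := by
    rw [mul_neg]
    exact eq_neg_of_add_eq_zero_left hXc0
  set p := Ac.charpoly with hp
  have key : Xc * (aeval (-Acᵀ) p) = 0 := by
    rw [← aeval_intertwine Ac (-Acᵀ) Xc hx p, hp, Matrix.aeval_self_charpoly, zero_mul]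
  have hdeg : 0 < p.degree := by
    rw [hp, Matrix.charpoly_degree_eq_dim]
    exact_mod_cast Fintype.card_pos
  have hunit : IsUnit (aeval (-Acᵀ) p) := by
    by_contra hun
    have h0 : (0 : ℂ) ∈ spectrum ℂ (aeval (-Acᵀ) p) := (spectrum.zero_mem_iff (R := ℂ)).2 hun
    rw [spectrum.map_polynomial_aeval_of_degree_pos (-Acᵀ) p hdeg] at h0
    obtain ⟨ν, hν, hνp⟩ := h0
    rw [neg_mem_spec_iff, spec_transpose] at hν
    -- -ν ∈ spectrum Ac
    have hν2 : ν ∈ spectrum ℂ Ac := (mem_spec_iff_root Ac ν).2 hνp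
    have hν3 : star (-ν) ∈ spectrum ℂ Ac := star_mem_spec A hν
    exact h ν (star (-ν)) hν2 hν3 (by simp)
  have hXcz : Xc = 0 := by
    obtain ⟨u, hu⟩ := hunit
    have h2 : Xc * ((↑u : Matrix n n ℂ) * (↑u⁻¹ : Matrix n n ℂ))
        = 0 * (↑u⁻¹ : Matrix n n ℂ) := by
      rw [← mul_assoc, hu, key, zero_mul]
    rwa [Units.mul_inv, mul_one, zero_mul] at h2
  ext i j
  have := congrFun (congrFun hXcz i) j
  simpa [hXc, Matrix.map_apply] using this

end LyapAux
open Matrix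

/-- Multi-index type: an `N`-tuple of indices with mode sizes `d i`. -/
abbrev Idx {N : ℕ} (d : Fin N → ℕ) : Type := ∀ i, Fin (d i)

/-- The Einstein product, contracting over the middle multi-index `K`:
`(A *_M B)_{j,i} = ∑_k A_{j,k} B_{k,i}`. -/
def eprod {J K I : Type*} [Fintype K] (A : Matrix J K ℝ) (B : Matrix K I ℝ) :
    Matrix J I ℝ :=
  Matrix.of fun j i => ∑ k, A j k * B k i

/-- The identity (diagonal) tensor. -/
def idT (J : Type*) [DecidableEq J] : Matrix J J ℝ :=
  Matrix.of fun j i => if j = i then 1 else 0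
/-- The unfolding map Ψ (column-major). -/
def unfold {N M : ℕ} {dJ : Fin N → ℕ} {dK : Fin M → ℕ}
    (A : Matrix (Idx dJ) (Idx dK) ℝ) :
    Matrix (Fin (∏ i, dJ i)) (Fin (∏ i, dK i)) ℝ :=
  Matrix.of fun p q => A (finPiFinEquiv.symm p) (finPiFinEquiv.symm q)

lemma eprod_eq {J K I : Type*} [Fintype K] (A : Matrix J K ℝ) (B : Matrix K I ℝ) :
    eprod A B = A * B := by
  ext i j
  rw [Matrix.mul_apply]
  rfl

/-- if λ + μ̄ ≠ 0 for all eigenvalues λ, μ of the square tensor A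
(eigenvalues taken as the complex spectrum of its unfolding), then the tensor
Lyapunov equation A * X + X * Aᵀ + B * Bᵀ = 0 has a unique solution. -/
theorem lyapunov_unique_solution {N M : ℕ} (dJ : Fin N → ℕ) (dK : Fin M → ℕ)
    (A : Matrix (Idx dJ) (Idx dJ) ℝ) (B : Matrix (Idx dJ) (Idx dK) ℝ)
    (h : ∀ lam mu : ℂ,
        lam ∈ spectrum ℂ ((unfold A).map (algebraMap ℝ ℂ)) →
        mu ∈ spectrum ℂ ((unfold A).map (algebraMap ℝ ℂ)) →
        lam + star mu ≠ 0) :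
    ∃! X : Matrix (Idx dJ) (Idx dJ) ℝ,
      eprod A X + eprod X Aᵀ + eprod B Bᵀ = 0 := by
  classical
  set e : Idx dJ ≃ Fin (∏ i, dJ i) := finPiFinEquiv
  have hEq : (unfold A).map (algebraMap ℝ ℂ)
      = Matrix.reindexAlgEquiv ℂ ℂ e (A.map (algebraMap ℝ ℂ)) := by
    ext p q
    simp [unfold, Matrix.reindexAlgEquiv_apply, Matrix.reindex_apply,
      Matrix.submatrix_apply, Matrix.map_apply]
    rfl
  have hspec : spectrum ℂ ((unfold A).map (algebraMap ℝ ℂ))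
      = spectrum ℂ (A.map (algebraMap ℝ ℂ)) := by
    rw [hEq]; exact AlgEquiv.spectrum_eq _ _
  rw [hspec] at h
  -- the Sylvester operator
  set L : Matrix (Idx dJ) (Idx dJ) ℝ →ₗ[ℝ] Matrix (Idx dJ) (Idx dJ) ℝ :=
    LinearMap.mulLeft ℝ A + LinearMap.mulRight ℝ Aᵀ with hL
  have hLapp : ∀ X, L X = A * X + X * Aᵀ := by
    intro X
    simp [hL, LinearMap.mulLeft_apply, LinearMap.mulRight_apply]
  have hinj : Function.Injective L := by
    intro X Y hXY
    have hz : L (X - Y) = 0 := by rw [map_sub, hXY, sub_self]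
    rw [hLapp] at hz
    have := LyapAux.sylvester_inj A h (X - Y) hz
    rwa [sub_eq_zero] at this
  have hsurj : Function.Surjective L := LinearMap.injective_iff_surjective.mp hinj
  obtain ⟨X, hX⟩ := hsurj (-(B * Bᵀ))
  rw [hLapp] at hX
  refine ⟨X, ?_, ?_⟩
  · show eprod A X + eprod X Aᵀ + eprod B Bᵀ = 0
    rw [eprod_eq, eprod_eq, eprod_eq, add_eq_zero_iff_eq_neg]
    exact hX
  · intro Y hY
    rw [eprod_eq, eprod_eq, eprod_eq, add_eq_zero_iff_eq_neg] at hY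
    have h0 : A * (Y - X) + (Y - X) * Aᵀ = 0 := by
      calc A * (Y - X) + (Y - X) * Aᵀ
          = (A * Y + Y * Aᵀ) - (A * X + X * Aᵀ) := by
            rw [Matrix.mul_sub, Matrix.sub_mul]; abel
        _ = 0 := by rw [hY, hX]; simp
    have := LyapAux.sylvester_inj A h (Y - X) h0
    rw [sub_eq_zero] at this
    exact this
end

section
/- If every eigenvalue of the square tensor A has negative real part, then for every initial state X_0, the solution X(t) = e^{A(t−t_0)} *_N X_0 of the homogeneous MLTI system Ẋ(t) = A *_N X(t) satisfies ‖X(t)‖ → 0 as t → ∞ (asymptotic stability). -/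
open Matrix

/-- The tensor exponential e^A (Einstein-product power series). -/
noncomputable def texp {q : Type*} [Fintype q] [DecidableEq q] (A : Matrix q q ℝ) :
    Matrix q q ℝ :=
  ∑' k : ℕ, ((k.factorial : ℝ)⁻¹) • A ^ k

section Aux

open NormedSpace Filter

/-- polynomial times decaying exponential tends to zero -/
lemma aux_real_decay {a : ℝ} (ha : a < 0) (i : ℕ) (c : ℝ) :
    Filter.Tendsto (fun t : ℝ => c * t ^ i * Real.exp (t * a)) Filter.atTop (nhds 0) := by
  have hpos : (0:ℝ) < -a := by linarith
  have h1 : Filter.Tendsto (fun t : ℝ => -a * t) Filter.atTop Filter.atTop :=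
    Filter.tendsto_id.const_mul_atTop hpos
  have h2 := (Real.tendsto_pow_mul_exp_neg_atTop_nhds_zero i).comp h1
  have h3 : Filter.Tendsto (fun t : ℝ => (c * ((-a) ^ i)⁻¹) * ((-a * t) ^ i * Real.exp (-(-a * t))))
      Filter.atTop (nhds 0) := by
    simpa using h2.const_mul (c * ((-a) ^ i)⁻¹)
  refine h3.congr fun t => ?_
  have hne : ((-a : ℝ)) ^ i ≠ 0 := pow_ne_zero _ (by linarith)
  rw [mul_pow]
  field_simp

lemma aux_complex_decay {μ : ℂ} (hμ : μ.re < 0) (i : ℕ) (c : ℂ) :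
    Filter.Tendsto (fun t : ℝ => Complex.exp (t * μ) * ((t : ℂ) ^ i * c)) Filter.atTop (nhds 0) := by
  rw [tendsto_zero_iff_norm_tendsto_zero]
  have key : Filter.Tendsto (fun t : ℝ => ‖c‖ * t ^ i * Real.exp (t * μ.re))
      Filter.atTop (nhds 0) := aux_real_decay hμ i ‖c‖
  apply squeeze_zero_norm' _ key
  filter_upwards [Filter.eventually_ge_atTop (0:ℝ)] with t ht
  have : ‖Complex.exp (↑t * μ) * ((t:ℂ) ^ i * c)‖
      = Real.exp (t * μ.re) * (|t| ^ i * ‖c‖) := by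
    rw [norm_mul, norm_mul, norm_pow, Complex.norm_exp]
    simp [Complex.norm_real]
  rw [norm_norm, this, abs_of_nonneg ht]
  ring_nf
  exact le_rfl
end Aux

open NormedSpace Filter in
lemma tendsto_exp_smul_mulVec {q : Type*} [Fintype q] [DecidableEq q]
    (B : Matrix q q ℂ) (hB : ∀ μ ∈ spectrum ℂ B, μ.re < 0)
    (v : q → ℂ) (j : q) :
    Filter.Tendsto (fun t : ℝ => (NormedSpace.exp ((t : ℂ) • B)).mulVec v j)
      Filter.atTop (nhds 0) := by
  letI : NormedAddCommGroup (Matrix q q ℂ) := Matrix.linftyOpNormedAddCommGroup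
  letI : NormedRing (Matrix q q ℂ) := Matrix.linftyOpNormedRing
  letI : NormedAlgebra ℂ (Matrix q q ℂ) := Matrix.linftyOpNormedAlgebra
  letI : CompleteSpace (Matrix q q ℂ) := FiniteDimensional.complete ℂ _
  set f : Module.End ℂ (q → ℂ) := Matrix.toLinAlgEquiv' B with hf
  have hspec : spectrum ℂ f = spectrum ℂ B := AlgEquiv.spectrum_eq _ _
  have hv : v ∈ ⨆ μ : ℂ, f.maxGenEigenspace μ := by
    rw [Module.End.iSup_maxGenEigenspace_eq_top f]; trivial
  refine Submodule.iSup_induction (motive := fun w =>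
      Filter.Tendsto (fun t : ℝ => (NormedSpace.exp ((t : ℂ) • B)).mulVec w j)
        Filter.atTop (nhds 0)) _ hv ?_ ?_ ?_
  · -- generalized eigenvector case
    intro μ w hw
    by_cases hw0 : w = 0
    · simpa [hw0] using tendsto_const_nhds
    obtain ⟨k, hk⟩ := (Module.End.mem_maxGenEigenspace f μ w).mp hw
    have hμ : μ.re < 0 := by
      apply hB
      rw [← hspec]
      refine Module.End.hasEigenvalue_iff_mem_spectrum.mp ?_
      refine Module.End.hasEigenvalue_of_hasGenEigenvalue (k := k) ?_
      rw [Module.End.hasGenEigenvalue_iff]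
      exact (Submodule.ne_bot_iff _).mpr
        ⟨w, Module.End.mem_genEigenspace_nat.mpr (LinearMap.mem_ker.mpr hk), hw0⟩
    set Nm : Matrix q q ℂ := B - μ • 1 with hNmdef
    have hNk : (Nm ^ k) *ᵥ w = 0 := by
      have heq : Matrix.toLinAlgEquiv' (Nm ^ k) = (f - μ • 1) ^ k := by
        rw [map_pow, map_sub, hf, _root_.map_smul, _root_.map_one]
      calc (Nm ^ k) *ᵥ w = Matrix.toLinAlgEquiv' (Nm ^ k) w :=
            (Matrix.toLinAlgEquiv'_apply _ _).symm
        _ = 0 := by rw [heq]; exact hk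
    let L : Matrix q q ℂ →L[ℂ] (q → ℂ) :=
      LinearMap.toContinuousLinearMap
        { toFun := fun M => M *ᵥ w
          map_add' := fun M N => Matrix.add_mulVec M N w
          map_smul' := fun c M => Matrix.smul_mulVec c M w }
    have key : ∀ t : ℝ, (NormedSpace.exp ((t : ℂ) • B)).mulVec w j
        = ∑ i ∈ Finset.range k,
            Complex.exp (↑t * μ) * ((t : ℂ) ^ i * ((i.factorial : ℂ)⁻¹ * (Nm ^ i *ᵥ w) j)) := by
      intro t
      have hsplit : (t : ℂ) • B = (↑t * μ) • (1 : Matrix q q ℂ) + (t : ℂ) • Nm := by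
        rw [hNmdef]; rw [smul_sub, smul_smul]; abel_nf
      have hcomm : Commute ((↑t * μ) • (1 : Matrix q q ℂ)) ((t : ℂ) • Nm) :=
        ((Commute.one_left _).smul_left _).smul_right _
      have hexp1 : NormedSpace.exp ((↑t * μ) • (1 : Matrix q q ℂ))
          = Complex.exp (↑t * μ) • (1 : Matrix q q ℂ) := by
        have := NormedSpace.algebraMap_exp_comm (𝔸 := Matrix q q ℂ) (↑t * μ)
        rw [Algebra.algebraMap_eq_smul_one, Algebra.algebraMap_eq_smul_one, ← Complex.exp_eq_exp_ℂ] at this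
        exact this.symm
      have hvanish : ∀ i : ℕ, i ∉ Finset.range k →
          (i.factorial : ℂ)⁻¹ • (((t : ℂ) • Nm) ^ i *ᵥ w) = 0 := by
        intro i hi
        rw [Finset.mem_range, not_lt] at hi
        rw [smul_pow, Matrix.smul_mulVec]
        have : Nm ^ i *ᵥ w = 0 := by
          rw [← Nat.sub_add_cancel hi, pow_add, ← Matrix.mulVec_mulVec, hNk,
            Matrix.mulVec_zero]
        rw [this, smul_zero, smul_zero]
      have hexp2 : NormedSpace.exp ((t : ℂ) • Nm) *ᵥ w
          = ∑ i ∈ Finset.range k, (i.factorial : ℂ)⁻¹ • (((t : ℂ) • Nm) ^ i *ᵥ w) := by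
        have hsum : Summable (fun i : ℕ => ((i.factorial : ℂ))⁻¹ • ((t : ℂ) • Nm) ^ i) :=
          NormedSpace.expSeries_summable' ((t : ℂ) • Nm)
        rw [NormedSpace.exp_eq_tsum ℂ]
        calc (∑' i : ℕ, ((i.factorial : ℂ))⁻¹ • ((t : ℂ) • Nm) ^ i) *ᵥ w
            = L (∑' i : ℕ, ((i.factorial : ℂ))⁻¹ • ((t : ℂ) • Nm) ^ i) := rfl
          _ = ∑' i : ℕ, (i.factorial : ℂ)⁻¹ • (((t : ℂ) • Nm) ^ i *ᵥ w) := by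
              rw [L.map_tsum hsum]
              exact tsum_congr fun i => by
                simp [L, LinearMap.coe_toContinuousLinearMap']
          _ = ∑ i ∈ Finset.range k, (i.factorial : ℂ)⁻¹ • (((t : ℂ) • Nm) ^ i *ᵥ w) :=
              tsum_eq_sum hvanish
      rw [hsplit, Matrix.exp_add_of_commute _ _ hcomm, hexp1, smul_mul_assoc, one_mul,
        Matrix.smul_mulVec, Pi.smul_apply, hexp2]
      rw [smul_eq_mul, Finset.sum_apply, Finset.mul_sum]
      refine Finset.sum_congr rfl fun i _ => ?_
      simp only [smul_pow, Matrix.smul_mulVec, Pi.smul_apply, smul_eq_mul]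
      ring
    simp only [key]
    have h0 : (0 : ℂ) = ∑ i ∈ Finset.range k, 0 := by simp
    rw [h0]
    exact tendsto_finset_sum _ fun i _ => aux_complex_decay hμ i _
  · simpa using tendsto_const_nhds
  · intro x y hx hy
    have := hx.add hy
    simpa [Matrix.mulVec_add] using this

/-- if every eigenvalue of A has negative real part, then the solution
X(t) = e^{A(t−t₀)} *_N X₀ of Ẋ = A *_N X satisfies ‖X(t)‖ → 0 as t → ∞. -/
theorem asymptotic_stability {N : ℕ} (dJ : Fin N → ℕ)
    (A : Matrix (Idx dJ) (Idx dJ) ℝ)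
    (hstab : ∀ mu ∈ spectrum ℂ ((unfold A).map (algebraMap ℝ ℂ)), mu.re < 0)
    (X0 : Idx dJ → ℝ) (t0 : ℝ) :
    Filter.Tendsto
      (fun t : ℝ => Real.sqrt (∑ j, ((texp ((t - t0) • A)).mulVec X0 j) ^ 2))
      Filter.atTop (nhds 0) := by
  set B : Matrix (Idx dJ) (Idx dJ) ℂ := A.map (algebraMap ℝ ℂ) with hB
  have hspecB : ∀ μ ∈ spectrum ℂ B, μ.re < 0 := by
    intro μ hμ
    apply hstab
    have hre : (unfold A).map (algebraMap ℝ ℂ)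
        = Matrix.reindexAlgEquiv ℂ ℂ finPiFinEquiv B := by
      ext p r
      simp [unfold, Matrix.reindexAlgEquiv_apply, Matrix.reindex_apply, Matrix.submatrix_apply,
        Matrix.map_apply, hB]
    rw [hre, AlgEquiv.spectrum_eq]
    exact hμ
  have hcomp : ∀ j, Filter.Tendsto (fun t : ℝ => (texp ((t - t0) • A)).mulVec X0 j)
      Filter.atTop (nhds 0) := by
    intro j
    have key : ∀ t : ℝ, (((texp ((t - t0) • A)).mulVec X0 j : ℝ) : ℂ)
        = (NormedSpace.exp (((t - t0 : ℝ) : ℂ) • B)).mulVec (fun i => (X0 i : ℂ)) j := by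
      intro t
      letI : NormedAddCommGroup (Matrix (Idx dJ) (Idx dJ) ℝ) := Matrix.linftyOpNormedAddCommGroup
      letI : NormedRing (Matrix (Idx dJ) (Idx dJ) ℝ) := Matrix.linftyOpNormedRing
      letI : NormedAlgebra ℝ (Matrix (Idx dJ) (Idx dJ) ℝ) := Matrix.linftyOpNormedAlgebra
      letI : CompleteSpace (Matrix (Idx dJ) (Idx dJ) ℝ) := FiniteDimensional.complete ℝ _
      letI : NormedAddCommGroup (Matrix (Idx dJ) (Idx dJ) ℂ) := Matrix.linftyOpNormedAddCommGroup
      letI : NormedRing (Matrix (Idx dJ) (Idx dJ) ℂ) := Matrix.linftyOpNormedRing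
      letI : NormedAlgebra ℝ (Matrix (Idx dJ) (Idx dJ) ℂ) := Matrix.linftyOpNormedAlgebra
      have htexp : texp ((t - t0) • A) = NormedSpace.exp ((t - t0) • A) := by
        rw [NormedSpace.exp_eq_tsum ℝ, texp]
      have hc : Continuous (⇑((algebraMap ℝ ℂ).mapMatrix :
          Matrix (Idx dJ) (Idx dJ) ℝ →+* Matrix (Idx dJ) (Idx dJ) ℂ)) :=
        continuous_id.matrix_map (continuous_algebraMap ℝ ℂ)
      have hmap : (NormedSpace.exp ((t - t0) • A)).map (algebraMap ℝ ℂ)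
          = NormedSpace.exp (((t - t0) • A).map (algebraMap ℝ ℂ)) := by
        letI : NormedAlgebra ℚ (Matrix (Idx dJ) (Idx dJ) ℝ) := NormedAlgebra.restrictScalars ℚ ℝ _
        have := NormedSpace.map_exp ((algebraMap ℝ ℂ).mapMatrix) hc ((t - t0) • A)
        simp only [RingHom.mapMatrix_apply] at this
        exact this
      have hsm : ((t - t0) • A).map (algebraMap ℝ ℂ) = ((t - t0 : ℝ) : ℂ) • B := by
        ext i k
        simp only [Matrix.map_apply, Matrix.smul_apply, smul_eq_mul, hB, Complex.real_smul, Complex.coe_algebraMap]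
        push_cast
        ring
      have hcast : ∀ M : Matrix (Idx dJ) (Idx dJ) ℝ,
          ((M.mulVec X0 j : ℝ) : ℂ) = (M.map (algebraMap ℝ ℂ)).mulVec (fun i => (X0 i : ℂ)) j := by
        intro M
        simp only [Matrix.mulVec, dotProduct, Matrix.map_apply]
        push_cast
        rfl
      rw [hcast, htexp, hmap, hsm]
    have hshift : Filter.Tendsto (fun t : ℝ => t - t0) Filter.atTop Filter.atTop := by
      simpa [sub_eq_add_neg] using Filter.tendsto_atTop_add_const_right Filter.atTop (-t0)
        Filter.tendsto_id
    have hcc := (tendsto_exp_smul_mulVec B hspecB (fun i => (X0 i : ℂ)) j).comp hshift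
    have hre := (Complex.continuous_re.tendsto 0).comp hcc
    refine Filter.Tendsto.congr (fun t => ?_) (by simpa using hre)
    show (((NormedSpace.exp (((t - t0 : ℝ) : ℂ) • B)).mulVec (fun i => (X0 i : ℂ)) j)).re
      = (texp ((t - t0) • A)).mulVec X0 j
    rw [← key t, Complex.ofReal_re]
  have hsq : Filter.Tendsto (fun t : ℝ => ∑ j, ((texp ((t - t0) • A)).mulVec X0 j) ^ 2)
      Filter.atTop (nhds 0) := by
    have h0 : (0 : ℝ) = ∑ _j : Idx dJ, 0 := by simp
    rw [h0]
    exact tendsto_finset_sum _ fun j _ => by simpa using (hcomp j).pow 2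
  have := (Real.continuous_sqrt.tendsto 0).comp hsq
  simpa [Function.comp_def, Real.sqrt_zero] using this
end
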